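/- Let K be a convex body in ℝⁿ containing the origin in its interior, with C² boundary and everywhere positive Gaussian curvature, and let φ : (0,∞) → (0,∞) be concave with φ(0) := 0. Then the L_φ-affine surface area as_φ(K) = ∫_{S^{n-1}} φ(1/(f_K(u) h_K(u)^{n+1})) h_K(u) f_K(u) dσ(u) satisfies as_φ(K) ≤ n·|K|·φ(|K°|/|K|), where |K| is the volume of K and K° = {y : ⟨x,y⟩ ≤ 1 for all x ∈ K} is the polar body. -/

import Mathlib

open MeasureTheory
open scoped NNReal ENNReal

/-- for a convex body `K` of class `C²₊` (encoded by its support function `hK`,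
its curvature function `fK`, and the standard identities `∫ hK·fK dσ = n|K|` and
`∫ hK⁻ⁿ dσ = n|K°|` they satisfy), and a concave `φ : (0,∞) → (0,∞)` with `φ(0) = 0`,
the `L_φ`-affine surface area satisfies `as_φ(K) ≤ n·|K|·φ(|K°|/|K|)`. -/
theorem stmt6 {n : ℕ} (hn : 2 ≤ n)
    (K : Set (EuclideanSpace ℝ (Fin n)))
    (hKconv : Convex ℝ K) (hKcomp : IsCompact K)
    (hK0 : (0 : EuclideanSpace ℝ (Fin n)) ∈ interior K)
    (hK fK : Metric.sphere (0 : EuclideanSpace ℝ (Fin n)) 1 → ℝ)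
    (hsupp : ∀ u, hK u = sSup ((fun x => (inner ℝ x (u : EuclideanSpace ℝ (Fin n)) : ℝ)) '' K))
    (hKpos : ∀ u, 0 < hK u) (fKpos : ∀ u, 0 < fK u)
    (hKcont : Continuous hK) (fKcont : Continuous fK)
    (vol pvol : ℝ)
    (hvol : vol = (volume K).toReal)
    (hpvol : pvol = (volume {y : EuclideanSpace ℝ (Fin n) |
      ∀ x ∈ K, (inner ℝ x y : ℝ) ≤ 1}).toReal)
    (hcone : ∫ u, hK u * fK u ∂(μH[(n - 1 : ℝ)]) = n * vol)
    (hpolarvol : ∫ u, (hK u ^ (n : ℕ))⁻¹ ∂(μH[(n - 1 : ℝ)]) = n * pvol)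
    (φ : ℝ → ℝ) (hφpos : ∀ t : ℝ, 0 < t → 0 < φ t)
    (hφconc : ConcaveOn ℝ (Set.Ioi 0) φ) (hφ0 : φ 0 = 0) :
    ∫ u, φ (1 / (fK u * hK u ^ (n + 1))) * hK u * fK u ∂(μH[(n - 1 : ℝ)])
      ≤ n * vol * φ (pvol / vol) := by
  set μ : Measure (Metric.sphere (0 : EuclideanSpace ℝ (Fin n)) 1) :=
    μH[(n - 1 : ℝ)] with hμ
  -- the sphere is nonempty
  haveI : CompactSpace (Metric.sphere (0 : EuclideanSpace ℝ (Fin n)) 1) :=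
    isCompact_iff_compactSpace.mp (isCompact_sphere _ _)
  haveI : Nonempty (Metric.sphere (0 : EuclideanSpace ℝ (Fin n)) 1) := by
    refine ⟨⟨EuclideanSpace.single ⟨0, by omega⟩ (1 : ℝ), ?_⟩⟩
    simp [EuclideanSpace.norm_single]
  -- basic positivity
  have volpos : 0 < vol := by
    rw [hvol]
    refine ENNReal.toReal_pos ?_ hKcomp.measure_lt_top.ne
    exact (Measure.measure_pos_of_nonempty_interior _ ⟨0, hK0⟩).ne'
  have nvolpos : 0 < (n : ℝ) * vol := by positivity
  -- the weight and the integrand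
  set w := fun u => hK u * fK u with hw
  set g := fun u => 1 / (fK u * hK u ^ (n + 1)) with hg
  have wpos : ∀ u, 0 < w u := fun u => mul_pos (hKpos u) (fKpos u)
  have wcont : Continuous w := hKcont.mul fKcont
  have gpos : ∀ u, 0 < g u := fun u =>
    div_pos one_pos (mul_pos (fKpos u) (pow_pos (hKpos u) _))
  have gcont : Continuous g :=
    continuous_const.div (fKcont.mul (hKcont.pow _))
      (fun u => (mul_pos (fKpos u) (pow_pos (hKpos u) _)).ne')
  -- w is integrable (otherwise its integral would vanish)
  have wInt : Integrable w μ := by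
    by_contra h
    rw [integral_undef h] at hcone
    exact nvolpos.ne' hcone.symm
  -- the weighted measure
  set wn := fun u => (w u).toNNReal with hwn
  have wn_meas : Measurable wn := wcont.measurable.real_toNNReal
  set ν := μ.withDensity (fun u => (wn u : ℝ≥0∞)) with hν
  have hcoe : ∀ u, ((wn u : ℝ≥0) : ℝ) = w u := fun u =>
    Real.coe_toNNReal _ (wpos u).le
  have νuniv : ν Set.univ = ENNReal.ofReal ((n : ℝ) * vol) := by
    rw [hν, withDensity_apply _ MeasurableSet.univ, Measure.restrict_univ, ← hcone]
    rw [ofReal_integral_eq_lintegral_ofReal wInt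
      (Filter.Eventually.of_forall fun u => (wpos u).le)]
    rfl
  haveI : IsFiniteMeasure ν := ⟨by rw [νuniv]; exact ENNReal.ofReal_lt_top⟩
  haveI : NeZero ν := ⟨by
    rw [← Measure.measure_univ_ne_zero, νuniv]
    simp [ENNReal.ofReal_eq_zero, not_le, nvolpos]
    exact ⟨by omega, volpos⟩⟩
  -- converting ν-integrals into μ-integrals
  have conv : ∀ F : Metric.sphere (0 : EuclideanSpace ℝ (Fin n)) 1 → ℝ, ∫ u, F u ∂ν = ∫ u, w u * F u ∂μ := by
    intro F
    rw [hν, integral_withDensity_eq_integral_smul wn_meas]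
    refine integral_congr_ae (Filter.EventuallyEq.of_eq (funext fun u => ?_))
    rw [NNReal.smul_def, hcoe, smul_eq_mul]
  -- ∫ g dν = n * pvol
  have intg : ∫ u, g u ∂ν = (n : ℝ) * pvol := by
    rw [conv, ← hpolarvol]
    refine integral_congr_ae (Filter.EventuallyEq.of_eq (funext fun u => ?_))
    have h1 := (hKpos u).ne'
    have h2 := (fKpos u).ne'
    simp only [hw, hg]
    field_simp
    ring
  -- ∫ φ∘g dν = LHS
  have intφ : ∫ u, φ (g u) ∂ν
      = ∫ u, φ (1 / (fK u * hK u ^ (n + 1))) * hK u * fK u ∂μ := by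
    rw [conv]
    refine integral_congr_ae (Filter.EventuallyEq.of_eq (funext fun u => ?_))
    rw [hw, hg]
    ring
  -- bounds for g and φ ∘ g by compactness
  have φcont : ContinuousOn φ (Set.Ioi 0) := hφconc.continuousOn isOpen_Ioi
  have φgcont : Continuous (fun u => φ (g u)) :=
    φcont.comp_continuous gcont fun u => gpos u
  obtain ⟨u₀, -, hu₀⟩ := isCompact_univ.exists_isMaxOn Set.univ_nonempty gcont.continuousOn
  obtain ⟨u₁, -, hu₁⟩ := isCompact_univ.exists_isMinOn Set.univ_nonempty gcont.continuousOn
  obtain ⟨u₂, -, hu₂⟩ := isCompact_univ.exists_isMaxOn Set.univ_nonempty φgcont.continuousOn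
  have hc : (0 : ℝ) < g u₁ := gpos u₁
  -- Jensen's inequality on Icc (g u₁) (g u₀)
  have hconc' : ConcaveOn ℝ (Set.Icc (g u₁) (g u₀)) φ :=
    hφconc.subset (fun x hx => lt_of_lt_of_le hc hx.1) (convex_Icc _ _)
  have φcont' : ContinuousOn φ (Set.Icc (g u₁) (g u₀)) :=
    φcont.mono fun x hx => lt_of_lt_of_le hc hx.1
  have hfs : ∀ᵐ u ∂ν, g u ∈ Set.Icc (g u₁) (g u₀) :=
    Filter.Eventually.of_forall fun u => ⟨hu₁ (Set.mem_univ u), hu₀ (Set.mem_univ u)⟩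
  have hfi : Integrable g ν := by
    refine (integrable_const (g u₀)).mono' gcont.aestronglyMeasurable ?_
    exact Filter.Eventually.of_forall fun u => by
      rw [Real.norm_of_nonneg (gpos u).le]; exact hu₀ (Set.mem_univ u)
  have hgi : Integrable (φ ∘ g) ν := by
    refine (integrable_const (φ (g u₂))).mono' φgcont.aestronglyMeasurable ?_
    exact Filter.Eventually.of_forall fun u => by
      rw [Function.comp_apply, Real.norm_of_nonneg (hφpos _ (gpos u)).le]
      exact hu₂ (Set.mem_univ u)
  have jensen := hconc'.le_map_average φcont' isClosed_Icc hfs hfi hgi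
  rw [average_eq, average_eq, measureReal_def, νuniv, ENNReal.toReal_ofReal nvolpos.le,
    smul_eq_mul, smul_eq_mul, intg, intφ] at jensen
  have hm : ((n : ℝ) * vol)⁻¹ * ((n : ℝ) * pvol) = pvol / vol := by
    have hn0 : (n : ℝ) ≠ 0 := by positivity
    field_simp
  rw [hm] at jensen
  have := mul_le_mul_of_nonneg_left jensen nvolpos.le
  calc ∫ u, φ (1 / (fK u * hK u ^ (n + 1))) * hK u * fK u ∂μ
      = (n : ℝ) * vol * (((n : ℝ) * vol)⁻¹
          * ∫ u, φ (1 / (fK u * hK u ^ (n + 1))) * hK u * fK u ∂μ) := by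
        field_simp
    _ ≤ (n : ℝ) * vol * φ (pvol / vol) := this
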